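/- Let d ≤ 0 be a half-integer and e ≥ d²/2 - d + 1/3 a real number. Then (16d³ - 3d² + 36de + 36e² - 6e)/(4d-1)² + d/3 - 1/12 ≥ (108d⁴ + 40d³ + 24d² - 60d + 23)/(12(4d-1)²) > 0. -/

import Mathlib

/-- Numerical content of Lemma 3.8(i): for a half-integer `d ≤ 0` and a real
`e ≥ d²/2 - d + 1/3`, one has
`(16d³ - 3d² + 36de + 36e² - 6e)/(4d-1)² + d/3 - 1/12
  ≥ (108d⁴ + 40d³ + 24d² - 60d + 23)/(12(4d-1)²) > 0`. -/
theorem stmt12 (d e : ℝ) (hd : ∃ m : ℤ, 2 * d = m) (hd0 : d ≤ 0)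
    (he : d^2/2 - d + 1/3 ≤ e) :
    (108*d^4 + 40*d^3 + 24*d^2 - 60*d + 23)/(12*(4*d - 1)^2)
      ≤ (16*d^3 - 3*d^2 + 36*d*e + 36*e^2 - 6*e)/((4*d - 1)^2) + d/3 - 1/12 ∧
    0 < (108*d^4 + 40*d^3 + 24*d^2 - 60*d + 23)/(12*(4*d - 1)^2) := by
  have hpos : (0:ℝ) < (4*d - 1)^2 := by nlinarith
  constructor
  · rw [div_add' _ _ _ (ne_of_gt hpos), div_sub' (ne_of_gt hpos),
      div_le_div_iff₀ (by positivity) hpos]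
    nlinarith [sq_nonneg (e - (d^2/2 - d + 1/3)), sq_nonneg (4*d-1), mul_nonneg (sub_nonneg.2 he) (sq_nonneg (4*d-1)), sq_nonneg d, sq_nonneg (d*(4*d-1))]
  · apply div_pos _ (by positivity)
    nlinarith [sq_nonneg d, sq_nonneg (d+1), sq_nonneg (d*(3*d+1))]
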